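/- Fix α ∈ (1/2, 1) and C ∈ ℝ, and for n ≥ 2 set R_n = 2 ln n + C. Then there exist a constant c₁ > 0 and N such that for all n ≥ N and all r with R_n/2 ≤ r ≤ R_n, n · I(r, R_n) ≤ c₁ · √n. (In the hyperbolic random graph model, the expected degree of a vertex with radial coordinate r ≥ R_n/2 is at most c₁ √n.) -/

import Mathlib

open MeasureTheory Real Set

namespace HRGaux


lemma integrableOn_bdd {f : ℝ → ℝ} {s : Set ℝ} (hs : MeasurableSet s)
    (hμ : volume s ≠ ⊤) (hf : Measurable f) {M : ℝ} (h : ∀ x ∈ s, |f x| ≤ M) :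
    IntegrableOn f s := by
  refine Measure.integrableOn_of_bounded (M := M) hμ hf.aestronglyMeasurable ?_
  exact (ae_restrict_iff' hs).2 (ae_of_all _ fun x hx => by
    simpa [Real.norm_eq_abs] using h x hx)

lemma intervalIntegrable_bdd {f : ℝ → ℝ} (hf : Measurable f) {M : ℝ}
    (h : ∀ x, |f x| ≤ M) (a b : ℝ) : IntervalIntegrable f volume a b :=
  ⟨integrableOn_bdd measurableSet_Ioc measure_Ioc_lt_top.ne hf (fun x _ => h x),
   integrableOn_bdd measurableSet_Ioc measure_Ioc_lt_top.ne hf (fun x _ => h x)⟩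

lemma sqrt_exp (x : ℝ) : Real.sqrt (Real.exp x) = Real.exp (x / 2) := by
  rw [show Real.exp x = Real.exp (x / 2) ^ 2 by rw [sq, ← Real.exp_add]; ring_nf]
  exact Real.sqrt_sq (Real.exp_pos _).le

lemma exp_quarter_le_sinh {x : ℝ} (hx : 1 ≤ x) : Real.exp x / 4 ≤ Real.sinh x := by
  rw [Real.sinh_eq]
  have h1 : Real.exp (-x) ≤ 1 := Real.exp_le_one_iff.2 (by linarith)
  have h2 : (2 : ℝ) ≤ Real.exp x := by
    calc (2:ℝ) ≤ Real.exp 1 := by linarith [Real.exp_one_gt_d9]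
    _ ≤ Real.exp x := Real.exp_le_exp.2 hx
  linarith

lemma meas_ind (r s R : ℝ) : Measurable (fun φ : ℝ =>
    (if Real.cosh r * Real.cosh s - Real.sinh r * Real.sinh s * Real.cos φ ≤ Real.cosh R
      then (1:ℝ) else 0)) := by
  apply Measurable.ite _ measurable_const measurable_const
  exact measurableSet_le (by fun_prop) measurable_const

/-- Angular measure bound. -/
lemma angular_bound (r s R : ℝ) (hr : 0 < r) (hs : 0 < s) :
    ∫ φ in (0:ℝ)..(2*π),
      (if Real.cosh r * Real.cosh s - Real.sinh r * Real.sinh s * Real.cos φ ≤ Real.cosh R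
        then (1:ℝ) else 0)
    ≤ 4 * π * Real.sqrt (Real.cosh R / (2 * Real.sinh r * Real.sinh s)) := by
  have hshr : 0 < Real.sinh r := Real.sinh_pos_iff.2 hr
  have hshs : 0 < Real.sinh s := Real.sinh_pos_iff.2 hs
  set X : ℝ := Real.cosh R / (2 * Real.sinh r * Real.sinh s) with hXdef
  have hX : 0 < X := by positivity
  set b : ℝ := π * Real.sqrt X with hbdef
  have hb : 0 < b := by positivity
  set f : ℝ → ℝ := fun φ =>
    (if Real.cosh r * Real.cosh s - Real.sinh r * Real.sinh s * Real.cos φ ≤ Real.cosh R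
      then (1:ℝ) else 0) with hfdef
  have hfm : Measurable f := meas_ind r s R
  have hfb : ∀ x, |f x| ≤ 1 := by
    intro x; simp only [hfdef]; split <;> norm_num
  have hf01 : ∀ x, 0 ≤ f x ∧ f x ≤ 1 := by
    intro x; simp only [hfdef]; split <;> norm_num
  have hfint : ∀ a c : ℝ, IntervalIntegrable f volume a c := intervalIntegrable_bdd hfm hfb
  -- the key pointwise claim
  have key : ∀ φ, 0 ≤ φ → φ ≤ 2*π →
      Real.cosh r * Real.cosh s - Real.sinh r * Real.sinh s * Real.cos φ ≤ Real.cosh R →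
      φ ≤ b ∨ 2*π - b ≤ φ := by
    intro φ h0 h2 hc
    have hcos : Real.cos φ = 1 - 2 * Real.sin (φ/2) ^ 2 := by
      have h1 := Real.cos_two_mul' (φ/2)
      have h2 := Real.sin_sq_add_cos_sq (φ/2)
      have h3 : 2 * (φ/2) = φ := by ring
      rw [h3] at h1; linarith
    have hch : Real.cosh (r - s) = Real.cosh r * Real.cosh s - Real.sinh r * Real.sinh s :=
      Real.cosh_sub r s
    have hone : (1:ℝ) ≤ Real.cosh (r - s) := Real.one_le_cosh _
    have hsin2 : Real.sin (φ/2) ^ 2 ≤ X := by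
      rw [hXdef, le_div_iff₀ (by positivity)]
      rw [hcos] at hc
      nlinarith [hc, hch, hone]
    have hsle : Real.sin (φ/2) ≤ Real.sqrt X := by
      calc Real.sin (φ/2) ≤ |Real.sin (φ/2)| := le_abs_self _
      _ = Real.sqrt (Real.sin (φ/2) ^ 2) := (Real.sqrt_sq_eq_abs _).symm
      _ ≤ Real.sqrt X := Real.sqrt_le_sqrt hsin2
    have hπ := Real.pi_pos
    by_cases hφ : φ ≤ π
    · left
      have hj : φ / π ≤ Real.sin (φ/2) := by
        have := Real.mul_le_sin (x := φ/2) (by linarith) (by linarith)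
        calc φ / π = 2 / π * (φ/2) := by field_simp
        _ ≤ Real.sin (φ/2) := this
      have : φ / π ≤ Real.sqrt X := hj.trans hsle
      calc φ = (φ / π) * π := by field_simp
      _ ≤ Real.sqrt X * π := mul_le_mul_of_nonneg_right this hπ.le
      _ = b := by rw [hbdef]; ring
    · right
      push_neg at hφ
      have hsin_eq : Real.sin ((2*π - φ)/2) = Real.sin (φ/2) := by
        rw [show (2*π - φ)/2 = π - φ/2 by ring, Real.sin_pi_sub]
      have hj : (2*π - φ) / π ≤ Real.sin ((2*π - φ)/2) := by
        have := Real.mul_le_sin (x := (2*π - φ)/2) (by linarith) (by linarith)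
        calc (2*π - φ) / π = 2 / π * ((2*π - φ)/2) := by field_simp
        _ ≤ _ := this
      have : (2*π - φ) / π ≤ Real.sqrt X := by rw [hsin_eq] at hj; exact hj.trans hsle
      have h2b : 2*π - φ ≤ b := by
        calc 2*π - φ = ((2*π - φ) / π) * π := by field_simp
        _ ≤ Real.sqrt X * π := mul_le_mul_of_nonneg_right this hπ.le
        _ = b := by rw [hbdef]; ring
      linarith
  have hπ := Real.pi_pos
  by_cases hbπ : π ≤ b
  · calc (∫ φ in (0:ℝ)..(2*π), f φ)
          ≤ ∫ _ in (0:ℝ)..(2*π), (1:ℝ) := by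
            apply intervalIntegral.integral_mono_on (by linarith) (hfint 0 (2*π))
              (intervalIntegrable_const)
            intro x _; exact (hf01 x).2
    _ = 2*π := by simp
    _ ≤ 4 * π * Real.sqrt X := by
        have : 4 * π * Real.sqrt X = 4 * b := by rw [hbdef]; ring
        rw [this]; linarith
  · push_neg at hbπ
    set g : ℝ → ℝ := fun φ =>
      (if φ ≤ 2*b then (1:ℝ) else 0) + (if 2*π - 2*b < φ then (1:ℝ) else 0) with hgdef
    have hgm : Measurable g := by
      apply Measurable.add
      · exact Measurable.ite (measurableSet_le (by fun_prop) measurable_const)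
          measurable_const measurable_const
      · exact Measurable.ite (measurableSet_lt measurable_const (by fun_prop))
          measurable_const measurable_const
    have hgb : ∀ x, |g x| ≤ 2 := by
      intro x; simp only [hgdef]
      have h1 : (0:ℝ) ≤ (if x ≤ 2*b then (1:ℝ) else 0) ∧ (if x ≤ 2*b then (1:ℝ) else 0) ≤ 1 := by
        split <;> norm_num
      have h2 : (0:ℝ) ≤ (if 2*π - 2*b < x then (1:ℝ) else 0) ∧
          (if 2*π - 2*b < x then (1:ℝ) else 0) ≤ 1 := by split <;> norm_num
      rw [abs_le]; constructor <;> linarith [h1.1, h1.2, h2.1, h2.2]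
    have hgint : ∀ a c : ℝ, IntervalIntegrable g volume a c := intervalIntegrable_bdd hgm hgb
    have hfg : ∀ φ ∈ Icc (0:ℝ) (2*π), f φ ≤ g φ := by
      intro φ hφ
      by_cases hc : Real.cosh r * Real.cosh s - Real.sinh r * Real.sinh s * Real.cos φ ≤ Real.cosh R
      · have hf1 : f φ = 1 := by simp only [hfdef]; rw [if_pos hc]
        rcases key φ hφ.1 hφ.2 hc with h | h
        · have hle : φ ≤ 2*b := by linarith
          have : (if φ ≤ 2*b then (1:ℝ) else 0) = 1 := if_pos hle
          have h2 : (0:ℝ) ≤ (if 2*π - 2*b < φ then (1:ℝ) else 0) := by split <;> norm_num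
          simp only [hgdef]; rw [hf1, this]; linarith
        · have hlt : 2*π - 2*b < φ := by linarith
          have : (if 2*π - 2*b < φ then (1:ℝ) else 0) = 1 := if_pos hlt
          have h2 : (0:ℝ) ≤ (if φ ≤ 2*b then (1:ℝ) else 0) := by split <;> norm_num
          simp only [hgdef]; rw [hf1, this]; linarith
      · have hf0 : f φ = 0 := by simp only [hfdef]; rw [if_neg hc]
        have h2 : (0:ℝ) ≤ g φ := by
          simp only [hgdef]
          have h1 : (0:ℝ) ≤ (if φ ≤ 2*b then (1:ℝ) else 0) := by split <;> norm_num
          have h3 : (0:ℝ) ≤ (if 2*π - 2*b < φ then (1:ℝ) else 0) := by split <;> norm_num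
          linarith
        linarith [hf0, h2]
    have hi1m : Measurable (fun φ : ℝ => (if φ ≤ 2*b then (1:ℝ) else 0)) :=
      Measurable.ite (measurableSet_le (by fun_prop) measurable_const)
        measurable_const measurable_const
    have hi2m : Measurable (fun φ : ℝ => (if 2*π - 2*b < φ then (1:ℝ) else 0)) :=
      Measurable.ite (measurableSet_lt measurable_const (by fun_prop))
        measurable_const measurable_const
    have hi1b : ∀ x : ℝ, |(if x ≤ 2*b then (1:ℝ) else 0)| ≤ 1 := by
      intro x; split <;> norm_num
    have hi2b : ∀ x : ℝ, |(if 2*π - 2*b < x then (1:ℝ) else 0)| ≤ 1 := by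
      intro x; split <;> norm_num
    have hi1int := intervalIntegrable_bdd hi1m hi1b
    have hi2int := intervalIntegrable_bdd hi2m hi2b
    have hint1 : (∫ φ in (0:ℝ)..(2*π), (if φ ≤ 2*b then (1:ℝ) else 0)) = 2*b := by
      rw [← intervalIntegral.integral_add_adjacent_intervals (b := 2*b)
        (hi1int 0 (2*b)) (hi1int (2*b) (2*π))]
      have e1 : (∫ φ in (0:ℝ)..(2*b), (if φ ≤ 2*b then (1:ℝ) else 0))
          = ∫ φ in (0:ℝ)..(2*b), (1:ℝ) := by
        rw [intervalIntegral.integral_of_le (by linarith), intervalIntegral.integral_of_le (by linarith)]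
        exact setIntegral_congr_fun measurableSet_Ioc (fun x hx => if_pos hx.2)
      have e2 : (∫ φ in (2*b)..(2*π), (if φ ≤ 2*b then (1:ℝ) else 0))
          = ∫ φ in (2*b)..(2*π), (0:ℝ) := by
        rw [intervalIntegral.integral_of_le (by linarith), intervalIntegral.integral_of_le (by linarith)]
        exact setIntegral_congr_fun measurableSet_Ioc (fun x hx => if_neg (not_le.2 hx.1))
      rw [e1, e2]; simp
    have hint2 : (∫ φ in (0:ℝ)..(2*π), (if 2*π - 2*b < φ then (1:ℝ) else 0)) = 2*b := by
      rw [← intervalIntegral.integral_add_adjacent_intervals (b := 2*π - 2*b)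
        (hi2int 0 (2*π - 2*b)) (hi2int (2*π - 2*b) (2*π))]
      have e1 : (∫ φ in (0:ℝ)..(2*π - 2*b), (if 2*π - 2*b < φ then (1:ℝ) else 0))
          = ∫ φ in (0:ℝ)..(2*π - 2*b), (0:ℝ) := by
        rw [intervalIntegral.integral_of_le (by linarith), intervalIntegral.integral_of_le (by linarith)]
        exact setIntegral_congr_fun measurableSet_Ioc (fun x hx => if_neg (not_lt.2 hx.2))
      have e2 : (∫ φ in (2*π - 2*b)..(2*π), (if 2*π - 2*b < φ then (1:ℝ) else 0))
          = ∫ φ in (2*π - 2*b)..(2*π), (1:ℝ) := by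
        rw [intervalIntegral.integral_of_le (by linarith), intervalIntegral.integral_of_le (by linarith)]
        exact setIntegral_congr_fun measurableSet_Ioc (fun x hx => if_pos hx.1)
      rw [e1, e2]; simp
    calc (∫ φ in (0:ℝ)..(2*π), f φ)
          ≤ ∫ φ in (0:ℝ)..(2*π), g φ :=
            intervalIntegral.integral_mono_on (by linarith) (hfint 0 (2*π)) (hgint 0 (2*π)) hfg
    _ = 2*b + 2*b := by
        simp only [hgdef]
        rw [intervalIntegral.integral_add (hi1int 0 (2*π)) (hi2int 0 (2*π)), hint1, hint2]
    _ = 4 * π * Real.sqrt X := by rw [hbdef]; ring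



lemma h_meas (α : ℝ) :
    Measurable (fun s : ℝ => Real.sinh (α*s) * (Real.sqrt (Real.sinh s))⁻¹) := by
  fun_prop

lemma sqrt_sinh_pos {s : ℝ} (hs : 0 < s) : 0 < Real.sqrt (Real.sinh s) :=
  Real.sqrt_pos.2 (Real.sinh_pos_iff.2 hs)

lemma h_bound01 (α : ℝ) (hα0 : 0 < α) (hα1 : α < 1) {s : ℝ} (hs : s ∈ Ioc (0:ℝ) 1) :
    Real.sinh (α*s) * (Real.sqrt (Real.sinh s))⁻¹ ≤ 2 * s ^ (-(1/2) : ℝ) := by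
  obtain ⟨hs0, hs1⟩ := hs
  have h1 : Real.sinh (α*s) ≤ 2 := by
    have : Real.sinh (α*s) ≤ Real.sinh 1 := Real.sinh_le_sinh.2 (by nlinarith)
    have h2 : Real.sinh 1 ≤ 2 := by
      rw [Real.sinh_eq]
      have := Real.exp_one_lt_d9
      have h3 : 0 < Real.exp (-1 : ℝ) := Real.exp_pos _
      linarith
    linarith
  have hrw : s ^ (-(1/2) : ℝ) = (Real.sqrt s)⁻¹ := by
    rw [Real.rpow_neg hs0.le, Real.sqrt_eq_rpow]
  have h2 : (Real.sqrt (Real.sinh s))⁻¹ ≤ (Real.sqrt s)⁻¹ := by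
    apply inv_anti₀ (Real.sqrt_pos.2 hs0)
    exact Real.sqrt_le_sqrt (Real.self_le_sinh_iff.2 hs0.le)
  rw [hrw]
  have h0 : 0 ≤ Real.sinh (α*s) := Real.sinh_nonneg_iff.2 (by positivity)
  have h0' : 0 ≤ (Real.sqrt (Real.sinh s))⁻¹ := by positivity
  calc Real.sinh (α*s) * (Real.sqrt (Real.sinh s))⁻¹ ≤ 2 * (Real.sqrt s)⁻¹ :=
    mul_le_mul h1 h2 h0' (by norm_num)
  _ = 2 * (Real.sqrt s)⁻¹ := rfl

lemma h_bound1R (α : ℝ) (hα : 1/2 < α) {s : ℝ} (hs : 1 ≤ s) :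
    Real.sinh (α*s) * (Real.sqrt (Real.sinh s))⁻¹ ≤ Real.exp ((α - 1/2)*s) := by
  have h1 : Real.sinh (α*s) ≤ Real.exp (α*s) / 2 := by
    rw [Real.sinh_eq]
    have := Real.exp_pos (-(α*s))
    linarith
  have hsq4 : Real.sqrt (4:ℝ) = 2 := by
    rw [show (4:ℝ) = 2^2 by norm_num, Real.sqrt_sq (by norm_num)]
  have h2 : Real.exp (s/2) / 2 ≤ Real.sqrt (Real.sinh s) := by
    calc Real.exp (s/2) / 2 = Real.sqrt (Real.exp s / 4) := by
          rw [Real.sqrt_div (Real.exp_pos s).le, hsq4, sqrt_exp]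
    _ ≤ Real.sqrt (Real.sinh s) := Real.sqrt_le_sqrt (exp_quarter_le_sinh hs)
  have h3 : (Real.sqrt (Real.sinh s))⁻¹ ≤ (Real.exp (s/2) / 2)⁻¹ := by
    apply inv_anti₀ (by positivity) h2
  have h0 : 0 ≤ Real.sinh (α*s) := Real.sinh_nonneg_iff.2 (by positivity)
  calc Real.sinh (α*s) * (Real.sqrt (Real.sinh s))⁻¹
      ≤ (Real.exp (α*s) / 2) * ((Real.exp (s/2) / 2)⁻¹) :=
        mul_le_mul h1 h3 (by positivity) (by positivity)
  _ = Real.exp (α*s) / Real.exp (s/2) := by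
        field_simp
  _ = Real.exp ((α - 1/2)*s) := by
        rw [← Real.exp_sub]; ring_nf

lemma h_int01 (α : ℝ) (hα0 : 0 < α) (hα1 : α < 1) :
    IntegrableOn (fun s : ℝ => Real.sinh (α*s) * (Real.sqrt (Real.sinh s))⁻¹) (Ioc 0 1) := by
  have hmaj : IntegrableOn (fun s : ℝ => 2 * s ^ (-(1/2) : ℝ)) (Ioc 0 1) :=
    ((intervalIntegral.intervalIntegrable_rpow' (by norm_num : (-1:ℝ) < -(1/2))).1).const_mul 2
  refine Integrable.mono' hmaj ((h_meas α).aestronglyMeasurable.restrict) ?_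
  refine (ae_restrict_iff' measurableSet_Ioc).2 (ae_of_all _ fun s hs => ?_)
  have hs0 : 0 < s := hs.1
  have h0 : 0 ≤ Real.sinh (α*s) * (Real.sqrt (Real.sinh s))⁻¹ := by positivity
  rw [Real.norm_eq_abs, abs_of_nonneg h0]
  exact h_bound01 α hα0 hα1 hs

lemma h_int1R (α R : ℝ) (hα : 1/2 < α) :
    IntegrableOn (fun s : ℝ => Real.sinh (α*s) * (Real.sqrt (Real.sinh s))⁻¹) (Ioc 1 R) := by
  rcases le_or_gt R 1 with hR | hR
  · rw [Ioc_eq_empty (by exact fun h => absurd hR (not_le.2 h))]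
    exact integrableOn_empty
  · apply integrableOn_bdd measurableSet_Ioc measure_Ioc_lt_top.ne (h_meas α)
      (M := Real.exp ((α - 1/2)*R))
    intro s hs
    have h0 : 0 ≤ Real.sinh (α*s) * (Real.sqrt (Real.sinh s))⁻¹ := by
      have hs0 : 0 < s := lt_of_lt_of_le one_pos hs.1.le
      have hα0 : 0 < α := by linarith
      positivity
    rw [abs_of_nonneg h0]
    calc Real.sinh (α*s) * (Real.sqrt (Real.sinh s))⁻¹ ≤ Real.exp ((α - 1/2)*s) :=
      h_bound1R α hα hs.1.le
    _ ≤ Real.exp ((α - 1/2)*R) := Real.exp_le_exp.2 (by nlinarith [hs.2])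

lemma h_intOn (α R : ℝ) (hα : 1/2 < α) (hα1 : α < 1) (hR : 1 ≤ R) :
    IntegrableOn (fun s : ℝ => Real.sinh (α*s) * (Real.sqrt (Real.sinh s))⁻¹) (Ioc 0 R) := by
  rw [← Ioc_union_Ioc_eq_Ioc (by norm_num : (0:ℝ) ≤ 1) hR]
  exact (h_int01 α (by linarith) hα1).union (h_int1R α R hα)

lemma sint (α R : ℝ) (hα : 1/2 < α) (hα1 : α < 1) (hR : 1 ≤ R) :
    (∫ s in Ioc (0:ℝ) R, Real.sinh (α*s) * (Real.sqrt (Real.sinh s))⁻¹)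
      ≤ 4 + Real.exp ((α - 1/2)*R) / (α - 1/2) := by
  have hα0 : 0 < α := by linarith
  have hsplit : (∫ s in Ioc (0:ℝ) R, Real.sinh (α*s) * (Real.sqrt (Real.sinh s))⁻¹)
      = (∫ s in Ioc (0:ℝ) 1, Real.sinh (α*s) * (Real.sqrt (Real.sinh s))⁻¹)
      + (∫ s in Ioc (1:ℝ) R, Real.sinh (α*s) * (Real.sqrt (Real.sinh s))⁻¹) := by
    rw [← setIntegral_union (Ioc_disjoint_Ioc_of_le le_rfl) measurableSet_Ioc
      (h_int01 α hα0 hα1) (h_int1R α R hα), Ioc_union_Ioc_eq_Ioc (by norm_num : (0:ℝ) ≤ 1) hR]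
  have hp1 : (∫ s in Ioc (0:ℝ) 1, Real.sinh (α*s) * (Real.sqrt (Real.sinh s))⁻¹) ≤ 4 := by
    have hmaj : IntegrableOn (fun s : ℝ => 2 * s ^ (-(1/2) : ℝ)) (Ioc 0 1) :=
      ((intervalIntegral.intervalIntegrable_rpow' (by norm_num : (-1:ℝ) < -(1/2))).1).const_mul 2
    calc (∫ s in Ioc (0:ℝ) 1, Real.sinh (α*s) * (Real.sqrt (Real.sinh s))⁻¹)
        ≤ ∫ s in Ioc (0:ℝ) 1, 2 * s ^ (-(1/2) : ℝ) :=
          setIntegral_mono_on (h_int01 α hα0 hα1) hmaj measurableSet_Ioc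
            (fun s hs => h_bound01 α hα0 hα1 hs)
    _ = 4 := by
        rw [← intervalIntegral.integral_of_le (by norm_num : (0:ℝ) ≤ 1),
          intervalIntegral.integral_const_mul,
          integral_rpow (Or.inl (by norm_num : (-1:ℝ) < -(1/2)))]
        norm_num
  have hp2 : (∫ s in Ioc (1:ℝ) R, Real.sinh (α*s) * (Real.sqrt (Real.sinh s))⁻¹)
      ≤ Real.exp ((α - 1/2)*R) / (α - 1/2) := by
    have hk : (0:ℝ) < α - 1/2 := by linarith
    have hcont : Continuous (fun s : ℝ => Real.exp ((α - 1/2)*s)) := by continuity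
    have hmaj : IntegrableOn (fun s : ℝ => Real.exp ((α - 1/2)*s)) (Ioc 1 R) :=
      hcont.integrableOn_Ioc
    have hder : ∀ x ∈ uIcc (1:ℝ) R,
        HasDerivAt (fun y => Real.exp ((α - 1/2)*y)/(α - 1/2)) (Real.exp ((α - 1/2)*x)) x := by
      intro x _
      have h1 : HasDerivAt (fun y : ℝ => (α - 1/2)*y) (α - 1/2) x := by
        simpa using (hasDerivAt_id x).const_mul (α - 1/2)
      have h3 := ((Real.hasDerivAt_exp ((α - 1/2)*x)).comp x h1).div_const (α - 1/2)
      have hmd : Real.exp ((α - 1/2)*x) = Real.exp ((α - 1/2)*x) * (α - 1/2) / (α - 1/2) :=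
        (mul_div_cancel_right₀ _ (by linarith : α - 1/2 ≠ 0)).symm
      rw [hmd]; exact h3
    have hval : (∫ s in (1:ℝ)..R, Real.exp ((α - 1/2)*s))
        = Real.exp ((α - 1/2)*R)/(α - 1/2) - Real.exp ((α - 1/2)*1)/(α - 1/2) :=
      intervalIntegral.integral_eq_sub_of_hasDerivAt hder (hcont.intervalIntegrable 1 R)
    calc (∫ s in Ioc (1:ℝ) R, Real.sinh (α*s) * (Real.sqrt (Real.sinh s))⁻¹)
        ≤ ∫ s in Ioc (1:ℝ) R, Real.exp ((α - 1/2)*s) :=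
          setIntegral_mono_on (h_int1R α R hα) hmaj measurableSet_Ioc
            (fun s hs => h_bound1R α hα hs.1.le)
    _ = ∫ s in (1:ℝ)..R, Real.exp ((α - 1/2)*s) :=
          (intervalIntegral.integral_of_le hR).symm
    _ ≤ Real.exp ((α - 1/2)*R) / (α - 1/2) := by
          rw [hval]
          have : 0 < Real.exp ((α - 1/2)*1) := Real.exp_pos _
          have h4 : 0 < Real.exp ((α - 1/2)*1)/(α - 1/2) := by positivity
          linarith
  linarith


end HRGaux

open HRGaux

/-- `hrgI α r R` is the probability measure `μ(B_r(R) ∩ B_0(R))` in the hyperbolic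
random graph model: the probability that a vertex sampled in the disk of radius `R`
(with radial density `α sinh(α s)/(cosh(α R) - 1)` and uniform angle) lies within
hyperbolic distance `R` of the point with polar coordinates `(r, 0)`. -/
noncomputable def hrgI (α r R : ℝ) : ℝ :=
  (1 / (2 * Real.pi)) * ∫ φ in (0 : ℝ)..(2 * Real.pi), ∫ s in (0 : ℝ)..R,
    if Real.cosh r * Real.cosh s - Real.sinh r * Real.sinh s * Real.cos φ ≤ Real.cosh R
    then α * Real.sinh (α * s) / (Real.cosh (α * R) - 1) else 0

set_option maxHeartbeats 2000000 in
/-- In the hyperbolic random graph model with `R_n = 2 ln n + C`, the expected degree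
`n · I(r, R_n)` of a vertex with radial coordinate `r ≥ R_n/2` is at most `c₁ √n`
for some constant `c₁ > 0` and all sufficiently large `n`. -/
theorem expected_degree_outer_upper_bound (α C : ℝ)
    (hα : 1 / 2 < α) (hα1 : α < 1) :
    ∃ c₁ > 0, ∃ N : ℕ, ∀ n : ℕ, N ≤ n → ∀ r : ℝ,
      (2 * Real.log n + C) / 2 ≤ r → r ≤ 2 * Real.log n + C →
      (n : ℝ) * hrgI α r (2 * Real.log n + C) ≤ c₁ * Real.sqrt n := by
  have hα0 : 0 < α := by linarith
  have hπ : 0 < π := Real.pi_pos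
  refine ⟨16 * α * (4 + (α - 1/2)⁻¹) * Real.exp (-(C/4)),
    mul_pos (mul_pos (by positivity : (0:ℝ) < 16 * α)
      (by
        have h2 : (0:ℝ) < α - 1/2 := by linarith
        have h3 : (0:ℝ) < (α - 1/2)⁻¹ := inv_pos.2 h2
        linarith : (0:ℝ) < 4 + (α - 1/2)⁻¹)) (Real.exp_pos _),
    ⌈Real.exp ((4 - C)/2)⌉₊ + 1, ?_⟩
  intro n hn r hr1 hr2
  set R := 2 * Real.log n + C with hRdef
  have hn1 : (1:ℝ) ≤ n := by
    have : 1 ≤ n := le_trans (by omega) hn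
    exact_mod_cast this
  have hn0 : (0:ℝ) < n := by linarith
  have hexpn : Real.exp ((4 - C)/2) ≤ n := by
    calc Real.exp ((4 - C)/2) ≤ (⌈Real.exp ((4 - C)/2)⌉₊ : ℝ) := Nat.le_ceil _
    _ ≤ n := by exact_mod_cast le_trans (Nat.le_succ _) hn
  have hR4 : 4 ≤ R := by
    have hlog : (4 - C)/2 ≤ Real.log n := (Real.le_log_iff_exp_le hn0).2 hexpn
    rw [hRdef]; linarith
  have hr2' : 2 ≤ r := by linarith
  have hR0 : 0 < R := by linarith
  have hD : 0 < Real.cosh (α*R) - 1 := by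
    have : 1 < Real.cosh (α*R) := Real.one_lt_cosh.2 (ne_of_gt (mul_pos hα0 hR0))
    linarith
  have hshr : 0 < Real.sinh r := Real.sinh_pos_iff.2 (by linarith)
  -- key quantities
  set Q : ℝ := Real.sqrt (Real.cosh R / (2 * Real.sinh r)) with hQdef
  set c₂ : ℝ := α * (Real.cosh (α*R) - 1)⁻¹ * (4 * π * Q) with hc₂def
  have hQ0 : 0 ≤ Q := Real.sqrt_nonneg _
  have hc₂0 : 0 ≤ c₂ := by positivity
  set ρ : ℝ → ℝ := fun s => α * Real.sinh (α*s) / (Real.cosh (α*R) - 1) with hρdef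
  set F : ℝ × ℝ → ℝ := fun p =>
    if Real.cosh r * Real.cosh p.2 - Real.sinh r * Real.sinh p.2 * Real.cos p.1 ≤ Real.cosh R
    then ρ p.2 else 0 with hFdef
  have hFmeas : Measurable F := by
    apply Measurable.ite (measurableSet_le (by fun_prop) measurable_const) _ measurable_const
    simp only [hρdef]; fun_prop
  have hρ_nonneg : ∀ s : ℝ, 0 ≤ s → 0 ≤ ρ s := by
    intro s hs
    simp only [hρdef]
    have : 0 ≤ Real.sinh (α*s) := Real.sinh_nonneg_iff.2 (by positivity)
    positivity
  -- product integrability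
  have hIntProd : IntegrableOn F (Ioc 0 (2*π) ×ˢ Ioc 0 R) (volume.prod volume) := by
    refine Measure.integrableOn_of_bounded
      (M := α * Real.sinh (α*R) / (Real.cosh (α*R) - 1)) ?_ hFmeas.aestronglyMeasurable ?_
    · rw [Measure.prod_prod]
      exact (ENNReal.mul_lt_top measure_Ioc_lt_top measure_Ioc_lt_top).ne
    · refine (ae_restrict_iff' (measurableSet_Ioc.prod measurableSet_Ioc)).2
        (ae_of_all _ fun p hp => ?_)
      have hp2 := hp.2
      have h1 : 0 ≤ ρ p.2 := hρ_nonneg p.2 hp2.1.le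
      have h2 : ρ p.2 ≤ α * Real.sinh (α*R) / (Real.cosh (α*R) - 1) := by
        simp only [hρdef]
        have hsle : Real.sinh (α*p.2) ≤ Real.sinh (α*R) :=
          Real.sinh_le_sinh.2 (by nlinarith [hp2.2])
        gcongr
      have hM0 : 0 ≤ α * Real.sinh (α*R) / (Real.cosh (α*R) - 1) := by
        have : 0 ≤ Real.sinh (α*R) := Real.sinh_nonneg_iff.2 (by positivity)
        positivity
      rw [Real.norm_eq_abs]
      simp only [hFdef]
      split
      · rw [abs_of_nonneg h1]; exact h2
      · simpa using hM0
  have hInt2 : Integrable F ((volume.restrict (Ioc 0 (2*π))).prod (volume.restrict (Ioc 0 R))) := by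
    rw [Measure.prod_restrict]; exact hIntProd
  have hswap := MeasureTheory.integral_integral_swap
    (f := fun φ s => F (φ, s)) (μ := volume.restrict (Ioc 0 (2*π)))
    (ν := volume.restrict (Ioc 0 R)) hInt2
  have hrgI_eq : hrgI α r R
      = (1/(2*π)) * ∫ s in Ioc (0:ℝ) R, ∫ φ in Ioc (0:ℝ) (2*π), F (φ, s) := by
    rw [hrgI]
    congr 1
    rw [intervalIntegral.integral_of_le (by linarith : (0:ℝ) ≤ 2*π), ← hswap]
    refine setIntegral_congr_fun measurableSet_Ioc (fun φ _ => ?_)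
    rw [intervalIntegral.integral_of_le (by linarith : (0:ℝ) ≤ R)]
  -- inner bound
  have hinner : ∀ s ∈ Ioc (0:ℝ) R, (∫ φ in Ioc (0:ℝ) (2*π), F (φ, s))
      ≤ c₂ * (Real.sinh (α*s) * (Real.sqrt (Real.sinh s))⁻¹) := by
    intro s hs
    have hs0 : 0 < s := hs.1
    have hshs : 0 < Real.sinh s := Real.sinh_pos_iff.2 hs0
    have heq1 : ∀ φ : ℝ, F (φ, s) = ρ s *
        (if Real.cosh r * Real.cosh s - Real.sinh r * Real.sinh s * Real.cos φ ≤ Real.cosh R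
          then (1:ℝ) else 0) := by
      intro φ; simp only [hFdef]; split <;> simp
    have hstep : (∫ φ in Ioc (0:ℝ) (2*π), F (φ, s)) = ρ s *
        ∫ φ in (0:ℝ)..(2*π),
          (if Real.cosh r * Real.cosh s - Real.sinh r * Real.sinh s * Real.cos φ ≤ Real.cosh R
            then (1:ℝ) else 0) := by
      rw [intervalIntegral.integral_of_le (by linarith : (0:ℝ) ≤ 2*π)]
      simp only [heq1]
      rw [integral_const_mul]
    rw [hstep]
    have hA := angular_bound r s R (by linarith : 0 < r) hs0
    have hsep : ρ s * (4 * π * Real.sqrt (Real.cosh R / (2 * Real.sinh r * Real.sinh s)))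
        = c₂ * (Real.sinh (α*s) * (Real.sqrt (Real.sinh s))⁻¹) := by
      have hdd : Real.cosh R / (2 * Real.sinh r * Real.sinh s)
          = (Real.cosh R / (2 * Real.sinh r)) / Real.sinh s := by
        rw [div_div]
      have hsqrt : Real.sqrt (Real.cosh R / (2 * Real.sinh r * Real.sinh s))
          = Q / Real.sqrt (Real.sinh s) := by
        rw [hdd, Real.sqrt_div (by positivity) _, hQdef]
      rw [hsqrt]
      simp only [hρdef, hc₂def]
      field_simp
    calc ρ s * ∫ φ in (0:ℝ)..(2*π),
          (if Real.cosh r * Real.cosh s - Real.sinh r * Real.sinh s * Real.cos φ ≤ Real.cosh R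
            then (1:ℝ) else 0)
        ≤ ρ s * (4 * π * Real.sqrt (Real.cosh R / (2 * Real.sinh r * Real.sinh s))) :=
          mul_le_mul_of_nonneg_left hA (hρ_nonneg s hs0.le)
    _ = c₂ * (Real.sinh (α*s) * (Real.sqrt (Real.sinh s))⁻¹) := hsep
  -- outer monotonicity
  have hmaj : IntegrableOn
      (fun s : ℝ => c₂ * (Real.sinh (α*s) * (Real.sqrt (Real.sinh s))⁻¹)) (Ioc 0 R) :=
    (h_intOn α R hα hα1 (by linarith)).const_mul c₂
  have hIntInner : IntegrableOn (fun s : ℝ => ∫ φ in Ioc (0:ℝ) (2*π), F (φ, s)) (Ioc 0 R) :=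
    hInt2.integral_prod_right
  have hmono : (∫ s in Ioc (0:ℝ) R, ∫ φ in Ioc (0:ℝ) (2*π), F (φ, s))
      ≤ ∫ s in Ioc (0:ℝ) R, c₂ * (Real.sinh (α*s) * (Real.sqrt (Real.sinh s))⁻¹) :=
    setIntegral_mono_on hIntInner hmaj measurableSet_Ioc hinner
  have hfin : (∫ s in Ioc (0:ℝ) R, c₂ * (Real.sinh (α*s) * (Real.sqrt (Real.sinh s))⁻¹))
      ≤ c₂ * (4 + Real.exp ((α - 1/2)*R) / (α - 1/2)) := by
    rw [integral_const_mul]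
    exact mul_le_mul_of_nonneg_left (sint α R hα hα1 (by linarith)) hc₂0
  -- numeric bounds
  have hQb : Q ≤ 2 * Real.exp (R/4) := by
    have h1 : Real.cosh R ≤ Real.exp R := by
      rw [Real.cosh_eq]
      have h2 : Real.exp (-R) ≤ 1 := Real.exp_le_one_iff.2 (by linarith)
      have h3 : 1 ≤ Real.exp R := Real.one_le_exp (by linarith)
      linarith
    have h2 : Real.exp r / 2 ≤ 2 * Real.sinh r := by
      have := exp_quarter_le_sinh (show (1:ℝ) ≤ r by linarith)
      linarith
    have h3 : Real.cosh R / (2 * Real.sinh r) ≤ Real.exp R / (Real.exp r / 2) :=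
      div_le_div₀ (Real.exp_pos R).le h1 (by positivity) h2
    have h4 : Real.exp R / (Real.exp r / 2) = 2 * Real.exp (R - r) := by
      rw [Real.exp_sub]; field_simp
    have h5 : Real.exp (R - r) ≤ Real.exp (R/2) := Real.exp_le_exp.2 (by linarith)
    have h6 : Real.cosh R / (2 * Real.sinh r) ≤ 4 * Real.exp (R/2) := by
      rw [h4] at h3
      have := Real.exp_pos (R/2)
      linarith
    calc Q ≤ Real.sqrt (4 * Real.exp (R/2)) := Real.sqrt_le_sqrt h6
    _ = 2 * Real.exp (R/4) := by
        rw [Real.sqrt_mul (by norm_num : (0:ℝ) ≤ 4), sqrt_exp,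
          show Real.sqrt (4:ℝ) = 2 by
            rw [show (4:ℝ) = 2^2 by norm_num, Real.sqrt_sq (by norm_num)],
          show R/2/2 = R/4 by ring]
  have hDinv : (Real.cosh (α*R) - 1)⁻¹ ≤ 4 * Real.exp (-(α*R)) := by
    have he2 : (2:ℝ) ≤ Real.exp 1 := by linarith [Real.exp_one_gt_d9]
    have h4exp : (4:ℝ) ≤ Real.exp (α*R) := by
      have h1 : Real.exp 2 ≤ Real.exp (α*R) := Real.exp_le_exp.2 (by nlinarith)
      have h2 : Real.exp (2:ℝ) = Real.exp 1 * Real.exp 1 := by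
        rw [← Real.exp_add]; norm_num
      nlinarith
    have hD4 : Real.exp (α*R) / 4 ≤ Real.cosh (α*R) - 1 := by
      rw [Real.cosh_eq]
      have := Real.exp_pos (-(α*R))
      linarith
    calc (Real.cosh (α*R) - 1)⁻¹ ≤ (Real.exp (α*R) / 4)⁻¹ :=
      inv_anti₀ (by positivity) hD4
    _ = 4 * Real.exp (-(α*R)) := by
        rw [Real.exp_neg]; field_simp
  have hS : 4 + Real.exp ((α - 1/2)*R) / (α - 1/2)
      ≤ (4 + (α - 1/2)⁻¹) * Real.exp ((α - 1/2)*R) := by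
    have h1 : 1 ≤ Real.exp ((α - 1/2)*R) := Real.one_le_exp (by nlinarith)
    have h2 : 0 < α - 1/2 := by linarith
    have h3 : Real.exp ((α - 1/2)*R) / (α - 1/2) = (α - 1/2)⁻¹ * Real.exp ((α - 1/2)*R) := by
      field_simp
    rw [h3]
    nlinarith [inv_pos.2 h2]
  -- combine
  have hcore : hrgI α r R ≤ 16 * α * (4 + (α - 1/2)⁻¹) * Real.exp (-(R/4)) := by
    rw [hrgI_eq]
    have step1 : (1/(2*π)) * (∫ s in Ioc (0:ℝ) R, ∫ φ in Ioc (0:ℝ) (2*π), F (φ, s))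
        ≤ (1/(2*π)) * (c₂ * (4 + Real.exp ((α - 1/2)*R) / (α - 1/2))) := by
      apply mul_le_mul_of_nonneg_left _ (by positivity)
      exact hmono.trans hfin
    refine step1.trans ?_
    have heq : (1/(2*π)) * (c₂ * (4 + Real.exp ((α - 1/2)*R) / (α - 1/2)))
        = 2 * α * (Q * ((Real.cosh (α*R) - 1)⁻¹
            * (4 + Real.exp ((α - 1/2)*R) / (α - 1/2)))) := by
      simp only [hc₂def]
      field_simp
      ring
    rw [heq]
    have hbound : 2 * α * (Q * ((Real.cosh (α*R) - 1)⁻¹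
          * (4 + Real.exp ((α - 1/2)*R) / (α - 1/2))))
        ≤ 2 * α * ((2 * Real.exp (R/4)) * ((4 * Real.exp (-(α*R)))
            * ((4 + (α - 1/2)⁻¹) * Real.exp ((α - 1/2)*R)))) := by
      have hDinv0 : 0 ≤ (Real.cosh (α*R) - 1)⁻¹ := by positivity
      have hS0 : 0 ≤ 4 + Real.exp ((α - 1/2)*R) / (α - 1/2) := by
        have : 0 < Real.exp ((α - 1/2)*R) := Real.exp_pos _
        have h2 : 0 < α - 1/2 := by linarith
        positivity
      gcongr
    refine hbound.trans (le_of_eq ?_)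
    rw [show 2 * α * ((2 * Real.exp (R/4)) * ((4 * Real.exp (-(α*R)))
          * ((4 + (α - 1/2)⁻¹) * Real.exp ((α - 1/2)*R))))
        = 16 * α * (4 + (α - 1/2)⁻¹)
          * (Real.exp (R/4) * (Real.exp (-(α*R)) * Real.exp ((α - 1/2)*R))) by ring,
      ← Real.exp_add, ← Real.exp_add,
      show R/4 + (-(α*R) + (α - 1/2)*R) = -(R/4) by ring]
  -- conclude
  have hnexp : (n:ℝ) * Real.exp (-(R/4)) = Real.exp (-(C/4)) * Real.sqrt n := by
    have hexpR : Real.exp (R/4) = Real.exp (C/4) * Real.sqrt n := by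
      rw [hRdef, show (2 * Real.log n + C)/4 = Real.log n / 2 + C/4 by ring, Real.exp_add,
        show Real.log n / 2 = Real.log n / 2 by rfl]
      have : Real.exp (Real.log n / 2) = Real.sqrt n := by
        rw [← sqrt_exp, Real.exp_log hn0]
      rw [this]; ring
    have hsqn : 0 < Real.sqrt n := Real.sqrt_pos.2 hn0
    rw [Real.exp_neg, hexpR, Real.exp_neg]
    rw [mul_inv]
    have hsq : Real.sqrt n * Real.sqrt n = n := Real.mul_self_sqrt hn0.le
    field_simp
    nlinarith [hsq]
  calc (n:ℝ) * hrgI α r R ≤ (n:ℝ) * (16 * α * (4 + (α - 1/2)⁻¹) * Real.exp (-(R/4))) :=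
      mul_le_mul_of_nonneg_left hcore (by positivity)
  _ = 16 * α * (4 + (α - 1/2)⁻¹) * ((n:ℝ) * Real.exp (-(R/4))) := by ring
  _ = 16 * α * (4 + (α - 1/2)⁻¹) * (Real.exp (-(C/4)) * Real.sqrt n) := by rw [hnexp]
  _ = 16 * α * (4 + (α - 1/2)⁻¹) * Real.exp (-(C/4)) * Real.sqrt n := by ring
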